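/- Let X be a Banach space. Suppose that for every ε > 0 there exists δ > 0 such that for any f ∈ S(X*) there exists x ∈ S(X) with D(S(X) ∩ B(x, δ)) ⊆ B(f, ε) (condition (c)). Then for every ε > 0 there exists δ > 0 such that every support mapping maps any δ-net in S(X) to an ε-net in S(X*). Conversely, if condition (c) fails, then the net condition fails: there exist ε > 0 and, for each δ > 0, a δ-net in S(X) and a support mapping sending it to a set that is not an ε-net in S(X*). -/

import Mathlib

open NormedSpace

/-- Condition (c) holds if and only if, given `ε > 0`, there is `δ > 0` such that
every support mapping maps every `δ`-net in `S(X)` to an `ε`-net in `S(X*)`. -/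
theorem stmt_13 {X : Type*} [NormedAddCommGroup X] [NormedSpace ℝ X] [CompleteSpace X] :
    ((∀ ε : ℝ, 0 < ε → ∃ δ : ℝ, 0 < δ ∧
      ∀ f : StrongDual ℝ X, ‖f‖ = 1 → ∃ x : X, ‖x‖ = 1 ∧
        {g : StrongDual ℝ X | ‖g‖ = 1 ∧ ∃ z : X, ‖z‖ = 1 ∧ ‖z - x‖ < δ ∧ g z = 1} ⊆
          Metric.ball f ε) →
     (∀ ε : ℝ, 0 < ε → ∃ δ : ℝ, 0 < δ ∧
      ∀ φ : X → StrongDual ℝ X, (∀ y : X, ‖y‖ = 1 → ‖φ y‖ = 1 ∧ φ y y = 1) →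
        ∀ N : Set X, N ⊆ {y : X | ‖y‖ = 1} →
          (∀ z : X, ‖z‖ = 1 → ∃ n ∈ N, ‖z - n‖ ≤ δ) →
          ∀ f : StrongDual ℝ X, ‖f‖ = 1 → ∃ n ∈ N, ‖f - φ n‖ ≤ ε)) ∧
    (¬ (∀ ε : ℝ, 0 < ε → ∃ δ : ℝ, 0 < δ ∧
      ∀ f : StrongDual ℝ X, ‖f‖ = 1 → ∃ x : X, ‖x‖ = 1 ∧
        {g : StrongDual ℝ X | ‖g‖ = 1 ∧ ∃ z : X, ‖z‖ = 1 ∧ ‖z - x‖ < δ ∧ g z = 1} ⊆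
          Metric.ball f ε) →
     ¬ (∀ ε : ℝ, 0 < ε → ∃ δ : ℝ, 0 < δ ∧
      ∀ φ : X → StrongDual ℝ X, (∀ y : X, ‖y‖ = 1 → ‖φ y‖ = 1 ∧ φ y y = 1) →
        ∀ N : Set X, N ⊆ {y : X | ‖y‖ = 1} →
          (∀ z : X, ‖z‖ = 1 → ∃ n ∈ N, ‖z - n‖ ≤ δ) →
          ∀ f : StrongDual ℝ X, ‖f‖ = 1 → ∃ n ∈ N, ‖f - φ n‖ ≤ ε)) := by
  constructor
  · intro hc ε hε
    obtain ⟨δ, hδ, hδ'⟩ := hc ε hε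
    refine ⟨δ/2, by positivity, ?_⟩
    intro φ hφ N hN hnet f hf
    obtain ⟨x, hx, hsub⟩ := hδ' f hf
    obtain ⟨n, hnN, hn⟩ := hnet x hx
    have hn1 : ‖n‖ = 1 := hN hnN
    have hmem : φ n ∈ Metric.ball f ε := hsub ⟨(hφ n hn1).1, n, hn1, by
      calc ‖n - x‖ = ‖x - n‖ := norm_sub_rev _ _
        _ ≤ δ/2 := hn
        _ < δ := by linarith, (hφ n hn1).2⟩
    refine ⟨n, hnN, ?_⟩
    rw [Metric.mem_ball, dist_eq_norm] at hmem
    calc ‖f - φ n‖ = ‖φ n - f‖ := norm_sub_rev _ _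
      _ ≤ ε := hmem.le
  · intro hc hnet
    apply hc
    intro ε hε
    obtain ⟨δ, hδ, hδ'⟩ := hnet (ε/2) (by positivity)
    refine ⟨δ, hδ, ?_⟩
    intro f hf
    by_contra hcon
    push_neg at hcon
    classical
    set P : X → Prop := fun y => ∃ g : StrongDual ℝ X, ‖g‖ = 1 ∧ g y = 1 ∧ ε ≤ ‖g - f‖ with hP
    set φ : X → StrongDual ℝ X := fun y =>
      if h : P y then h.choose
      else if h2 : ∃ g : StrongDual ℝ X, ‖g‖ = 1 ∧ g y = 1 then h2.choose else 0 with hφdef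
    have hφprop : ∀ y : X, ‖y‖ = 1 → ‖φ y‖ = 1 ∧ φ y y = 1 := by
      intro y hy
      by_cases h : P y
      · simp only [hφdef, dif_pos h]
        exact ⟨h.choose_spec.1, h.choose_spec.2.1⟩
      · have h2 : ∃ g : StrongDual ℝ X, ‖g‖ = 1 ∧ g y = 1 := by
          obtain ⟨g, hg1, hg2⟩ := exists_dual_vector ℝ y (by
            intro h0; rw [h0] at hy; norm_num at hy)
          exact ⟨g, hg1, by rw [hg2, hy]; norm_num⟩
        simp only [hφdef, dif_neg h, dif_pos h2]
        exact ⟨h2.choose_spec.1, h2.choose_spec.2⟩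
    set N : Set X := {z | ‖z‖ = 1 ∧ P z} with hNdef
    have hNsub : N ⊆ {y : X | ‖y‖ = 1} := fun z hz => hz.1
    have hNnet : ∀ z : X, ‖z‖ = 1 → ∃ n ∈ N, ‖z - n‖ ≤ δ := by
      intro x hx
      have hx2 := hcon x hx
      rw [Set.not_subset] at hx2
      obtain ⟨g, ⟨hg1, z, hz1, hzx, hgz⟩, hgf⟩ := hx2
      rw [Metric.mem_ball, dist_eq_norm, not_lt] at hgf
      exact ⟨z, ⟨hz1, g, hg1, hgz, hgf⟩, by
        calc ‖x - z‖ = ‖z - x‖ := norm_sub_rev _ _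
          _ ≤ δ := hzx.le⟩
    obtain ⟨n, hnN, hnf⟩ := hδ' φ hφprop N hNsub hNnet f hf
    have hPn : P n := hnN.2
    have heq : φ n = hPn.choose := by simp [hφdef, dif_pos hPn]
    have hge : ε ≤ ‖φ n - f‖ := by rw [heq]; exact hPn.choose_spec.2.2
    have hrev : ‖φ n - f‖ = ‖f - φ n‖ := norm_sub_rev _ _
    linarith [hnf]
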